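/- Let S and Y be A-bounded operators on H admitting A-adjoints (i.e. there exist Ss, Ys with A∘Ss = S*∘A and A∘Ys = Y*∘A). Then w_𝔸([[0,0],[Y,S]]) ≤ w_A(S) + (1/2)·‖Y‖_A. -/

import Mathlib

noncomputable def sInner {E : Type*} [NormedAddCommGroup E] [InnerProductSpace ℂ E]
    (A : E →L[ℂ] E) (x y : E) : ℂ := inner ℂ (A x) y

noncomputable def sNorm {E : Type*} [NormedAddCommGroup E] [InnerProductSpace ℂ E]
    (A : E →L[ℂ] E) (x : E) : ℝ := Real.sqrt (sInner A x x).re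

/-- The `A`-operator seminorm. -/
noncomputable def opSNorm {E : Type*} [NormedAddCommGroup E] [InnerProductSpace ℂ E]
    (A T : E →L[ℂ] E) : ℝ := sSup {c | ∃ x : E, sNorm A x = 1 ∧ c = sNorm A (T x)}

/-- The `A`-numerical radius. -/
noncomputable def numRad {E : Type*} [NormedAddCommGroup E] [InnerProductSpace ℂ E]
    (A T : E →L[ℂ] E) : ℝ := sSup {c | ∃ x : E, sNorm A x = 1 ∧ c = ‖sInner A (T x) x‖}

/-- `T` is `A`-bounded. -/
def ABounded {E : Type*} [NormedAddCommGroup E] [InnerProductSpace ℂ E]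
    (A T : E →L[ℂ] E) : Prop := ∃ c > 0, ∀ x : E, sNorm A (T x) ≤ c * sNorm A x

/-- The 2×2 block operator `[[T, X], [Y, S]]` on `H ⊕ H` (with the ℓ² product structure). -/
noncomputable def blk {H : Type*} [NormedAddCommGroup H] [InnerProductSpace ℂ H]
    (T X Y S : H →L[ℂ] H) : WithLp 2 (H × H) →L[ℂ] WithLp 2 (H × H) :=
  ((WithLp.prodContinuousLinearEquiv 2 ℂ H H).symm.toContinuousLinearMap.comp
    (((T.coprod X).prod (Y.coprod S)).comp
      (WithLp.prodContinuousLinearEquiv 2 ℂ H H).toContinuousLinearMap))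

/-- The diagonal operator `𝔸 = diag(A, A)` on `H ⊕ H`. -/
noncomputable def twoA {H : Type*} [NormedAddCommGroup H] [InnerProductSpace ℂ H]
    (A : H →L[ℂ] H) : WithLp 2 (H × H) →L[ℂ] WithLp 2 (H × H) := blk A 0 0 A

section Aux
variable {E : Type*} [NormedAddCommGroup E] [InnerProductSpace ℂ E] [CompleteSpace E]

lemma sA_symm (A : E →L[ℂ] E) (hA : A.IsPositive) (x y : E) :
    (starRingEnd ℂ) (sInner A y x) = sInner A x y := by
  have h := hA.isSelfAdjoint
  rw [ContinuousLinearMap.isSelfAdjoint_iff'] at h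
  unfold sInner
  rw [inner_conj_symm, ← ContinuousLinearMap.adjoint_inner_left, h]

noncomputable def posCore (A : E →L[ℂ] E) (hA : A.IsPositive) :
    PreInnerProductSpace.Core ℂ E where
  inner x y := sInner A x y
  conj_inner_symm x y := sA_symm A hA x y
  re_inner_nonneg x := hA.re_inner_nonneg_left x
  add_left x y z := by simp [sInner, map_add, inner_add_left]
  smul_left x y r := by simp [sInner, map_smul, inner_smul_left, mul_comm]

lemma sNorm_nonneg (A : E →L[ℂ] E) (x : E) : 0 ≤ sNorm A x := Real.sqrt_nonneg _

lemma sNorm_sq (A : E →L[ℂ] E) (hA : A.IsPositive) (x : E) :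
    sNorm A x ^ 2 = (sInner A x x).re :=
  Real.sq_sqrt (hA.re_inner_nonneg_left x)

lemma cs (A : E →L[ℂ] E) (hA : A.IsPositive) (x y : E) :
    ‖sInner A x y‖ ≤ sNorm A x * sNorm A y := by
  have h := @InnerProductSpace.Core.inner_mul_inner_self_le ℂ E _ _ _ (posCore A hA) x y
  have hsym : ‖sInner A y x‖ = ‖sInner A x y‖ := by
    rw [← sA_symm A hA x y, RCLike.norm_conj]
  calc ‖sInner A x y‖ = Real.sqrt (‖sInner A x y‖ * ‖sInner A y x‖) := by
        rw [hsym, Real.sqrt_mul_self (norm_nonneg _)]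
    _ ≤ Real.sqrt ((sInner A x x).re * (sInner A y y).re) := Real.sqrt_le_sqrt h
    _ = sNorm A x * sNorm A y := Real.sqrt_mul (hA.re_inner_nonneg_left x) _

lemma sNorm_smul (A : E →L[ℂ] E) (c : ℂ) (x : E) :
    sNorm A (c • x) = ‖c‖ * sNorm A x := by
  unfold sNorm sInner
  have h1 : (inner ℂ (A (c • x)) (c • x) : ℂ) = ((‖c‖ ^ 2 : ℝ) : ℂ) * inner ℂ (A x) x := by
    rw [map_smul, inner_smul_left, inner_smul_right, ← mul_assoc, RCLike.conj_mul]
    norm_cast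
  rw [h1, Complex.re_ofReal_mul, Real.sqrt_mul (by positivity), Real.sqrt_sq (norm_nonneg _)]

lemma numRad_nonneg (A T : E →L[ℂ] E) : 0 ≤ numRad A T :=
  Real.sSup_nonneg (by rintro c ⟨x, -, rfl⟩; exact norm_nonneg _)

lemma opSNorm_nonneg (A T : E →L[ℂ] E) : 0 ≤ opSNorm A T :=
  Real.sSup_nonneg (by rintro c ⟨x, -, rfl⟩; exact sNorm_nonneg _ _)

lemma numRad_bound (A T : E →L[ℂ] E) (hA : A.IsPositive) (hT : ABounded A T) (x : E) :
    ‖sInner A (T x) x‖ ≤ numRad A T * sNorm A x ^ 2 := by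
  obtain ⟨cT, hcT, hb⟩ := hT
  have hbdd : BddAbove {c | ∃ u : E, sNorm A u = 1 ∧ c = ‖sInner A (T u) u‖} := by
    refine ⟨cT, ?_⟩
    rintro c ⟨u, hu, rfl⟩
    calc ‖sInner A (T u) u‖ ≤ sNorm A (T u) * sNorm A u := cs A hA _ _
      _ ≤ (cT * sNorm A u) * sNorm A u := by
          exact mul_le_mul_of_nonneg_right (hb u) (sNorm_nonneg A u)
      _ = cT := by rw [hu]; ring
  by_cases hx : sNorm A x = 0
  · have h1 : ‖sInner A (T x) x‖ ≤ 0 := by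
      have := cs A hA (T x) x
      rw [hx, mul_zero] at this
      exact this
    have h2 : (0:ℝ) ≤ numRad A T * sNorm A x ^ 2 := mul_nonneg (numRad_nonneg A T) (sq_nonneg _)
    linarith
  · set t := sNorm A x with ht
    have htpos : 0 < t := lt_of_le_of_ne (sNorm_nonneg A x) (Ne.symm hx)
    set u := ((t : ℂ))⁻¹ • x with hu
    have hun : sNorm A u = 1 := by
      rw [hu, sNorm_smul, norm_inv, Complex.norm_real, Real.norm_eq_abs,
        abs_of_pos htpos, ← ht, inv_mul_cancel₀ (ne_of_gt htpos)]
    have hmem : ‖sInner A (T u) u‖ ∈ {c | ∃ v : E, sNorm A v = 1 ∧ c = ‖sInner A (T v) v‖} :=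
      ⟨u, hun, rfl⟩
    have hle := le_csSup hbdd hmem
    have hval : ‖sInner A (T u) u‖ = (t⁻¹)^2 * ‖sInner A (T x) x‖ := by
      rw [hu]
      unfold sInner
      rw [map_smul, map_smul, inner_smul_left, inner_smul_right, ← mul_assoc, RCLike.conj_mul,
        norm_mul]
      congr 1
      simp [abs_of_pos htpos]
    rw [hval] at hle
    have : ‖sInner A (T x) x‖ = t^2 * ((t⁻¹)^2 * ‖sInner A (T x) x‖) := by
      field_simp
    rw [this]
    calc t^2 * ((t⁻¹)^2 * ‖sInner A (T x) x‖) ≤ t^2 * numRad A T := by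
          exact mul_le_mul_of_nonneg_left hle (by positivity)
      _ = numRad A T * t ^ 2 := by ring

lemma opSNorm_bound (A T : E →L[ℂ] E) (hA : A.IsPositive) (hT : ABounded A T) (x : E) :
    sNorm A (T x) ≤ opSNorm A T * sNorm A x := by
  obtain ⟨cT, hcT, hb⟩ := hT
  have hbdd : BddAbove {c | ∃ u : E, sNorm A u = 1 ∧ c = sNorm A (T u)} := by
    refine ⟨cT, ?_⟩
    rintro c ⟨u, hu, rfl⟩
    calc sNorm A (T u) ≤ cT * sNorm A u := hb u
      _ = cT := by rw [hu, mul_one]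
  by_cases hx : sNorm A x = 0
  · have h1 : sNorm A (T x) ≤ 0 := by
      have := hb x; rw [hx, mul_zero] at this; exact this
    have h2 : (0:ℝ) ≤ opSNorm A T * sNorm A x := by
      rw [hx, mul_zero]
    linarith
  · set t := sNorm A x with ht
    have htpos : 0 < t := lt_of_le_of_ne (sNorm_nonneg A x) (Ne.symm hx)
    set u := ((t : ℂ))⁻¹ • x with hu
    have hun : sNorm A u = 1 := by
      rw [hu, sNorm_smul, norm_inv, Complex.norm_real, Real.norm_eq_abs,
        abs_of_pos htpos, ← ht, inv_mul_cancel₀ (ne_of_gt htpos)]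
    have hmem : sNorm A (T u) ∈ {c | ∃ v : E, sNorm A v = 1 ∧ c = sNorm A (T v)} :=
      ⟨u, hun, rfl⟩
    have hle := le_csSup hbdd hmem
    have hval : sNorm A (T u) = t⁻¹ * sNorm A (T x) := by
      rw [hu, map_smul, sNorm_smul, norm_inv, Complex.norm_real, Real.norm_eq_abs,
        abs_of_pos htpos]
    rw [hval] at hle
    have : sNorm A (T x) = t * (t⁻¹ * sNorm A (T x)) := by field_simp
    rw [this]
    calc t * (t⁻¹ * sNorm A (T x)) ≤ t * opSNorm A T :=
          mul_le_mul_of_nonneg_left hle (le_of_lt htpos)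
      _ = opSNorm A T * t := by ring

end Aux

section Blk
variable {H : Type*} [NormedAddCommGroup H] [InnerProductSpace ℂ H]

lemma blk_apply (T X Y S : H →L[ℂ] H) (z : WithLp 2 (H × H)) :
    blk T X Y S z = (WithLp.equiv 2 (H × H)).symm (T z.fst + X z.snd, Y z.fst + S z.snd) := rfl

lemma equiv_symm_fst (p : H × H) : ((WithLp.equiv 2 (H × H)).symm p).fst = p.fst := rfl
lemma equiv_symm_snd (p : H × H) : ((WithLp.equiv 2 (H × H)).symm p).snd = p.snd := rfl

lemma sInner_twoA (A : H →L[ℂ] H) (u v : WithLp 2 (H × H)) :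
    sInner (twoA A) u v = sInner A u.fst v.fst + sInner A u.snd v.snd := by
  unfold sInner
  rw [twoA, blk_apply, WithLp.prod_inner_apply]
  simp

end Blk

theorem stmt7 {H : Type*} [NormedAddCommGroup H] [InnerProductSpace ℂ H] [CompleteSpace H]
    (A : H →L[ℂ] H) (hA : A.IsPositive)
    (S Y : H →L[ℂ] H) (hS : ABounded A S) (hY : ABounded A Y)
    (hSadm : ∃ Ss : H →L[ℂ] H, A.comp Ss = (ContinuousLinearMap.adjoint S).comp A)
    (hYadm : ∃ Ys : H →L[ℂ] H, A.comp Ys = (ContinuousLinearMap.adjoint Y).comp A) :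
    numRad (twoA A) (blk 0 0 Y S) ≤ numRad A S + (1 / 2) * opSNorm A Y := by
  have hrhs : 0 ≤ numRad A S + (1 / 2) * opSNorm A Y := by
    have := numRad_nonneg A S
    have := opSNorm_nonneg A Y
    linarith
  apply Real.sSup_le _ hrhs
  rintro c ⟨z, hz1, rfl⟩
  set a := sNorm A z.fst with ha
  set b := sNorm A z.snd with hb
  have ha0 : 0 ≤ a := sNorm_nonneg A _
  have hb0 : 0 ≤ b := sNorm_nonneg A _
  have hsum : a ^ 2 + b ^ 2 = 1 := by
    have h1 : sNorm (twoA A) z ^ 2 = 1 := by rw [hz1]; norm_num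
    rw [sNorm, Real.sq_sqrt] at h1
    · rw [sInner_twoA] at h1
      simp only [Complex.add_re] at h1
      rw [ha, hb, sNorm_sq A hA, sNorm_sq A hA]
      exact h1
    · rw [sInner_twoA]
      simp only [Complex.add_re]
      have h1 := hA.re_inner_nonneg_left z.fst
      have h2 := hA.re_inner_nonneg_left z.snd
      rw [RCLike.re_to_complex] at h1 h2
      exact add_nonneg h1 h2
  have hexp : sInner (twoA A) (blk 0 0 Y S z) z
      = sInner A (Y z.fst) z.snd + sInner A (S z.snd) z.snd := by
    rw [sInner_twoA, blk_apply, equiv_symm_fst, equiv_symm_snd]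
    simp [sInner, inner_add_left, map_add]
  rw [hexp]
  have h1 : ‖sInner A (Y z.fst) z.snd + sInner A (S z.snd) z.snd‖
      ≤ ‖sInner A (Y z.fst) z.snd‖ + ‖sInner A (S z.snd) z.snd‖ := norm_add_le _ _
  have h2 : ‖sInner A (Y z.fst) z.snd‖ ≤ opSNorm A Y * a * b := by
    calc ‖sInner A (Y z.fst) z.snd‖ ≤ sNorm A (Y z.fst) * sNorm A z.snd := cs A hA _ _
      _ ≤ (opSNorm A Y * a) * b :=
          mul_le_mul_of_nonneg_right (opSNorm_bound A Y hA hY z.fst) hb0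
      _ = opSNorm A Y * a * b := by ring
  have h3 : ‖sInner A (S z.snd) z.snd‖ ≤ numRad A S * b ^ 2 := numRad_bound A S hA hS z.snd
  have hnR := numRad_nonneg A S
  have hoS := opSNorm_nonneg A Y
  nlinarith [sq_nonneg (a - b), sq_nonneg (a + b), mul_nonneg ha0 hb0]
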